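/- Let (L,[-,-],{-,-,-}) be a Lie-Yamaguti algebra. If T : L → L is a Rota-Baxter operator of weight -1 on L, then the linear map 2T - id_L is a modified Rota-Baxter operator on L. -/
import Mathlib


/-- A Lie-Yamaguti algebra: bilinear bracket `br`, trilinear bracket `tr`,
satisfying (LY1)-(LY6). -/
structure LieYamaguti (K : Type*) (L : Type*) [Field K] [AddCommGroup L] [Module K L] where
  br : L →ₗ[K] L →ₗ[K] L
  tr : L →ₗ[K] L →ₗ[K] L →ₗ[K] L
  ly1 : ∀ x y, br x y = - br y x
  ly2 : ∀ x y z, tr x y z = - tr y x z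
  ly3 : ∀ x y z,
    br (br x y) z + br (br y z) x + br (br z x) y + tr x y z + tr y z x + tr z x y = 0
  ly4 : ∀ x y z a, tr (br x y) z a + tr (br z x) y a + tr (br y z) x a = 0
  ly5 : ∀ a b x y, tr a b (br x y) = br (tr a b x) y + br x (tr a b y)
  ly6 : ∀ a b x y z,
    tr a b (tr x y z) = tr (tr a b x) y z + tr x (tr a b y) z + tr x y (tr a b z)

/-- A modified Rota-Baxter operator on a Lie-Yamaguti algebra. -/
def IsMRB {K L : Type*} [Field K] [AddCommGroup L] [Module K L]
    (A : LieYamaguti K L) (R : L →ₗ[K] L) : Prop :=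
  (∀ x y, A.br (R x) (R y) = R (A.br (R x) y + A.br x (R y)) - A.br x y) ∧
  (∀ x y z, A.tr (R x) (R y) (R z) =
      R (A.tr x (R y) (R z) + A.tr (R x) y (R z) + A.tr (R x) (R y) z + A.tr x y z)
      - A.tr (R x) y z - A.tr x (R y) z - A.tr x y (R z))

/-- A Rota-Baxter operator of weight -1 on a Lie-Yamaguti algebra. -/
def IsRBWeightNegOne {K L : Type*} [Field K] [AddCommGroup L] [Module K L]
    (A : LieYamaguti K L) (T : L →ₗ[K] L) : Prop :=
  (∀ x y, A.br (T x) (T y) = T (A.br (T x) y + A.br x (T y) - A.br x y)) ∧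
  (∀ x y z, A.tr (T x) (T y) (T z) =
      T (A.tr x (T y) (T z) + A.tr (T x) y (T z) + A.tr (T x) (T y) z
        - A.tr x y (T z) - A.tr (T x) y z - A.tr x (T y) z + A.tr x y z))

/-- If `T` is a Rota-Baxter operator of weight -1 on a Lie-Yamaguti algebra, then
`2T - id` is a modified Rota-Baxter operator. -/
theorem isMRB_two_smul_sub_id (K L : Type*) [Field K] [CharZero K]
    [AddCommGroup L] [Module K L]
    (A : LieYamaguti K L) (T : L →ₗ[K] L) (hT : IsRBWeightNegOne A T) :
    IsMRB A ((2 : K) • T - LinearMap.id) := by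
  obtain ⟨h1, h2⟩ := hT
  constructor
  · intro x y
    simp only [LinearMap.sub_apply, LinearMap.smul_apply, LinearMap.id_apply, map_sub, map_add,
      map_smul, LinearMap.sub_apply, LinearMap.smul_apply, h1]
    module
  · intro x y z
    simp only [LinearMap.sub_apply, LinearMap.smul_apply, LinearMap.id_apply, map_sub, map_add,
      map_smul, LinearMap.sub_apply, LinearMap.smul_apply, h2]
    module
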